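/- Let A, B be n×n strict contractions with Cayley transforms C(A) = (A−iI)(A+iI)⁻¹ and C(B) = (B−iI)(B+iI)⁻¹. Then C(A) − C(B) = 2i(B+iI)⁻¹(A−B)(A+iI)⁻¹, and for each j = 1,…,n, σ_j(C(A)−C(B)) ≤ 2σ_j(A−B)/((1−σ_1(A))(1−σ_1(B))). -/

import Mathlib

open Matrix
open scoped ComplexOrder

noncomputable def eigDesc {n : ℕ} {A : Matrix (Fin n) (Fin n) ℂ} (hA : A.IsHermitian)
    (j : Fin n) : ℝ :=
  (hA.eigenvalues ∘ Tuple.sort hA.eigenvalues) j.rev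

noncomputable def singVal {n : ℕ} (A : Matrix (Fin n) (Fin n) ℂ) (j : Fin n) : ℝ :=
  Real.sqrt (eigDesc ((Matrix.posSemidef_conjTranspose_mul_self A).isHermitian) j)

namespace SV
variable {n : ℕ}

noncomputable def descPerm {A : Matrix (Fin n) (Fin n) ℂ} (hA : A.IsHermitian) :
    Equiv.Perm (Fin n) :=
  Fin.revPerm.trans (Tuple.sort hA.eigenvalues)

lemma eigDesc_eq {A : Matrix (Fin n) (Fin n) ℂ} (hA : A.IsHermitian) (j : Fin n) :
    eigDesc hA j = hA.eigenvalues (descPerm hA j) := rfl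

lemma eigDesc_antitone {A : Matrix (Fin n) (Fin n) ℂ} (hA : A.IsHermitian) :
    Antitone (eigDesc hA) := by
  intro i j hij
  exact Tuple.monotone_sort hA.eigenvalues (Fin.rev_le_rev.2 hij)

noncomputable def descBasis {A : Matrix (Fin n) (Fin n) ℂ} (hA : A.IsHermitian) :
    OrthonormalBasis (Fin n) ℂ (EuclideanSpace ℂ (Fin n)) :=
  hA.eigenvectorBasis.reindex (descPerm hA).symm

lemma descBasis_apply {A : Matrix (Fin n) (Fin n) ℂ} (hA : A.IsHermitian) (j : Fin n) :
    descBasis hA j = hA.eigenvectorBasis (descPerm hA j) := by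
  simp [descBasis, OrthonormalBasis.reindex_apply]

lemma toEuclideanLin_descBasis {A : Matrix (Fin n) (Fin n) ℂ} (hA : A.IsHermitian) (j : Fin n) :
    Matrix.toEuclideanLin A (descBasis hA j) = (eigDesc hA j : ℂ) • descBasis hA j := by
  apply (WithLp.equiv 2 _).injective
  ext i
  have h := congrFun (hA.mulVec_eigenvectorBasis (descPerm hA j)) i
  simp only [toEuclideanLin_apply, descBasis_apply, eigDesc_eq]
  simpa [Pi.smul_apply, Complex.real_smul] using h
variable {ι : Type*} [Fintype ι]

lemma parseval (b : OrthonormalBasis ι ℂ (EuclideanSpace ℂ (Fin n)))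
    (v : EuclideanSpace ℂ (Fin n)) : ‖v‖ ^ 2 = ∑ k, ‖b.repr v k‖ ^ 2 := by
  rw [← b.repr.norm_map v, EuclideanSpace.norm_eq,
    Real.sq_sqrt (by positivity)]

lemma rayleigh_sum {A : Matrix (Fin n) (Fin n) ℂ} (hA : A.IsHermitian)
    (v : EuclideanSpace ℂ (Fin n)) :
    (inner ℂ v (Matrix.toEuclideanLin A v) : ℂ) =
      ∑ k, (eigDesc hA k : ℂ) * (‖(descBasis hA).repr v k‖ ^ 2 : ℝ) := by
  set b := descBasis hA
  have hv : v = ∑ k, b.repr v k • b k := (b.sum_repr v).symm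
  have hT : Matrix.toEuclideanLin A v = ∑ k, (b.repr v k * eigDesc hA k) • b k := by
    conv_lhs => rw [hv]
    rw [map_sum]
    congr 1; ext k
    rw [_root_.map_smul, toEuclideanLin_descBasis, smul_smul, mul_comm]
  rw [hT, inner_sum]
  congr 1; ext k
  rw [inner_smul_right]
  have : (inner ℂ v (b k) : ℂ) = starRingEnd ℂ (b.repr v k) := by
    rw [OrthonormalBasis.repr_apply_apply]
    exact (inner_conj_symm _ _).symm
  rw [this]
  rw [mul_comm (b.repr v k) _, mul_assoc, Complex.mul_conj']
  push_cast [Complex.normSq_eq_norm_sq]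
  ring

lemma rayleigh_re_sum {A : Matrix (Fin n) (Fin n) ℂ} (hA : A.IsHermitian)
    (v : EuclideanSpace ℂ (Fin n)) :
    RCLike.re (inner ℂ v (Matrix.toEuclideanLin A v) : ℂ) =
      ∑ k, eigDesc hA k * ‖(descBasis hA).repr v k‖ ^ 2 := by
  rw [rayleigh_sum hA v, map_sum]
  congr 1; ext k
  rw [← Complex.ofReal_mul]
  exact RCLike.ofReal_re _

lemma rayleigh_le {A : Matrix (Fin n) (Fin n) ℂ} (hA : A.IsHermitian) (j : Fin n)
    (v : EuclideanSpace ℂ (Fin n)) (hvan : ∀ k, k < j → (descBasis hA).repr v k = 0) :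
    RCLike.re (inner ℂ v (Matrix.toEuclideanLin A v) : ℂ) ≤ eigDesc hA j * ‖v‖ ^ 2 := by
  rw [rayleigh_re_sum, parseval (descBasis hA), Finset.mul_sum]
  apply Finset.sum_le_sum
  intro k _
  rcases lt_or_ge k j with h | h
  · simp [hvan k h]
  · exact mul_le_mul_of_nonneg_right (eigDesc_antitone hA h) (by positivity)

lemma rayleigh_ge {A : Matrix (Fin n) (Fin n) ℂ} (hA : A.IsHermitian) (j : Fin n)
    (v : EuclideanSpace ℂ (Fin n)) (hvan : ∀ k, j < k → (descBasis hA).repr v k = 0) :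
    eigDesc hA j * ‖v‖ ^ 2 ≤ RCLike.re (inner ℂ v (Matrix.toEuclideanLin A v) : ℂ) := by
  rw [rayleigh_re_sum, parseval (descBasis hA), Finset.mul_sum]
  apply Finset.sum_le_sum
  intro k _
  rcases lt_or_ge j k with h | h
  · simp [hvan k h]
  · exact mul_le_mul_of_nonneg_right (eigDesc_antitone hA h) (by positivity)

lemma repr_eq_zero_of_mem_span (b : OrthonormalBasis (Fin n) ℂ (EuclideanSpace ℂ (Fin n)))
    (S : Set (Fin n)) {v : EuclideanSpace ℂ (Fin n)}
    (hv : v ∈ Submodule.span ℂ (b '' S)) {k : Fin n} (hk : k ∉ S) : b.repr v k = 0 := by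
  rw [OrthonormalBasis.repr_apply_apply]
  induction hv using Submodule.span_induction with
  | mem x hx =>
    obtain ⟨i, hiS, rfl⟩ := hx
    exact b.orthonormal.2 (fun h => hk (h ▸ hiS))
  | zero => exact inner_zero_right _
  | add x y _ _ hx hy => rw [inner_add_right, hx, hy, add_zero]
  | smul c x _ hx => rw [inner_smul_right, hx, mul_zero]

noncomputable def topSpan {A : Matrix (Fin n) (Fin n) ℂ} (hA : A.IsHermitian) (j : Fin n) :
    Submodule ℂ (EuclideanSpace ℂ (Fin n)) :=
  Submodule.span ℂ (descBasis hA '' ↑(Finset.Iic j))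

noncomputable def botSpan {A : Matrix (Fin n) (Fin n) ℂ} (hA : A.IsHermitian) (j : Fin n) :
    Submodule ℂ (EuclideanSpace ℂ (Fin n)) :=
  Submodule.span ℂ (descBasis hA '' ↑(Finset.Ici j))

lemma finrank_span_image (b : OrthonormalBasis (Fin n) ℂ (EuclideanSpace ℂ (Fin n)))
    (s : Finset (Fin n)) :
    Module.finrank ℂ (Submodule.span ℂ (b '' ↑s)) = s.card := by
  have hli : LinearIndependent ℂ (fun k : {x // x ∈ s} => b k) :=
    b.orthonormal.linearIndependent.comp Subtype.val Subtype.val_injective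
  have himg : b '' ↑s = Set.range (fun k : {x // x ∈ s} => b k) := by
    ext x; simp [Set.mem_image, Set.range]
  rw [himg, finrank_span_eq_card hli, Fintype.card_coe]

lemma finrank_topSpan {A : Matrix (Fin n) (Fin n) ℂ} (hA : A.IsHermitian) (j : Fin n) :
    Module.finrank ℂ (topSpan hA j) = j + 1 := by
  rw [topSpan, finrank_span_image, Fin.card_Iic]

lemma exists_cf {A : Matrix (Fin n) (Fin n) ℂ} (hA : A.IsHermitian) (j : Fin n)
    (W : Submodule ℂ (EuclideanSpace ℂ (Fin n))) (hW : n ≤ Module.finrank ℂ W + j) :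
    ∃ v ∈ W, v ≠ 0 ∧
      eigDesc hA j * ‖v‖ ^ 2 ≤ RCLike.re (inner ℂ v (Matrix.toEuclideanLin A v) : ℂ) := by
  have hsum := Submodule.finrank_sup_add_finrank_inf_eq (topSpan hA j) W
  have hsup : Module.finrank ℂ ↥(topSpan hA j ⊔ W) ≤ n := by
    simpa [finrank_euclideanSpace] using Submodule.finrank_le (topSpan hA j ⊔ W)
  have hpos : 0 < Module.finrank ℂ ↥(topSpan hA j ⊓ W) := by
    rw [finrank_topSpan] at hsum
    omega
  have hne : topSpan hA j ⊓ W ≠ ⊥ := by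
    intro h
    rw [h, finrank_bot] at hpos
    exact lt_irrefl 0 hpos
  obtain ⟨v, hv, hv0⟩ := Submodule.exists_mem_ne_zero_of_ne_bot hne
  refine ⟨v, hv.2, hv0, ?_⟩
  apply rayleigh_ge
  intro k hk
  exact repr_eq_zero_of_mem_span _ _ hv.1 (by simp [Finset.mem_Iic]; omega)


lemma toEuclideanLin_mul (M N : Matrix (Fin n) (Fin n) ℂ) (v : EuclideanSpace ℂ (Fin n)) :
    Matrix.toEuclideanLin (M * N) v = Matrix.toEuclideanLin M (Matrix.toEuclideanLin N v) := by
  simp [Matrix.toEuclideanLin_apply, Matrix.mulVec_mulVec]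

abbrev gramH (N : Matrix (Fin n) (Fin n) ℂ) : (Nᴴ * N).IsHermitian :=
  (Matrix.posSemidef_conjTranspose_mul_self N).isHermitian

lemma eigDesc_gram_nonneg (N : Matrix (Fin n) (Fin n) ℂ) (j : Fin n) :
    0 ≤ eigDesc (gramH N) j := by
  rw [eigDesc_eq]
  exact (Matrix.posSemidef_conjTranspose_mul_self N).eigenvalues_nonneg _

lemma singVal_nonneg (N : Matrix (Fin n) (Fin n) ℂ) (j : Fin n) : 0 ≤ singVal N j :=
  Real.sqrt_nonneg _

lemma singVal_sq (N : Matrix (Fin n) (Fin n) ℂ) (j : Fin n) :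
    singVal N j ^ 2 = eigDesc (gramH N) j :=
  Real.sq_sqrt (eigDesc_gram_nonneg N j)

lemma ray_gram (N : Matrix (Fin n) (Fin n) ℂ) (v : EuclideanSpace ℂ (Fin n)) :
    RCLike.re (inner ℂ v (Matrix.toEuclideanLin (Nᴴ * N) v) : ℂ) =
      ‖Matrix.toEuclideanLin N v‖ ^ 2 := by
  rw [toEuclideanLin_mul, Matrix.toEuclideanLin_conjTranspose_eq_adjoint,
    LinearMap.adjoint_inner_right]
  exact inner_self_eq_norm_sq _

lemma sq_norm_le (N : Matrix (Fin n) (Fin n) ℂ) (j : Fin n) (v : EuclideanSpace ℂ (Fin n))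
    (h : ∀ k, k < j → (descBasis (gramH N)).repr v k = 0) :
    ‖Matrix.toEuclideanLin N v‖ ^ 2 ≤ singVal N j ^ 2 * ‖v‖ ^ 2 := by
  rw [singVal_sq, ← ray_gram]
  exact rayleigh_le (gramH N) j v h

lemma norm_apply_le (N : Matrix (Fin n) (Fin n) ℂ) (hn : 0 < n) (v : EuclideanSpace ℂ (Fin n)) :
    ‖Matrix.toEuclideanLin N v‖ ≤ singVal N ⟨0, hn⟩ * ‖v‖ := by
  have h := sq_norm_le N ⟨0, hn⟩ v (fun k hk => absurd hk (by simp [Fin.lt_def]))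
  rw [← mul_pow] at h
  exact (pow_le_pow_iff_left₀ (norm_nonneg _) (mul_nonneg (singVal_nonneg _ _) (norm_nonneg _)) two_ne_zero).1 h


lemma finrank_botSpan {A : Matrix (Fin n) (Fin n) ℂ} (hA : A.IsHermitian) (j : Fin n) :
    Module.finrank ℂ (botSpan hA j) = n - j := by
  rw [botSpan, finrank_span_image, Fin.card_Ici]

lemma singVal_mul_le_left (X M : Matrix (Fin n) (Fin n) ℂ) (j : Fin n) :
    singVal (X * M) j ≤ singVal X ⟨0, j.pos⟩ * singVal M j := by
  have hfr : n ≤ Module.finrank ℂ (botSpan (gramH M) j) + j := by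
    rw [finrank_botSpan]
    have := j.isLt
    omega
  obtain ⟨v, hvW, hv0, hkey⟩ := exists_cf (gramH (X * M)) j (botSpan (gramH M) j) hfr
  have hM : ‖Matrix.toEuclideanLin M v‖ ^ 2 ≤ singVal M j ^ 2 * ‖v‖ ^ 2 := by
    refine sq_norm_le M j v fun k hk => repr_eq_zero_of_mem_span _ _ hvW ?_
    simp only [Finset.coe_Ici, Set.mem_Ici]
    exact not_le.2 hk
  have hX : ‖Matrix.toEuclideanLin X (Matrix.toEuclideanLin M v)‖ ≤
      singVal X ⟨0, j.pos⟩ * ‖Matrix.toEuclideanLin M v‖ := norm_apply_le X j.pos _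
  rw [ray_gram, toEuclideanLin_mul] at hkey
  have h2 : eigDesc (gramH (X * M)) j * ‖v‖ ^ 2 ≤
      (singVal X ⟨0, j.pos⟩ * singVal M j) ^ 2 * ‖v‖ ^ 2 := by
    calc eigDesc (gramH (X * M)) j * ‖v‖ ^ 2
        ≤ ‖Matrix.toEuclideanLin X (Matrix.toEuclideanLin M v)‖ ^ 2 := hkey
      _ ≤ (singVal X ⟨0, j.pos⟩ * ‖Matrix.toEuclideanLin M v‖) ^ 2 :=
          pow_le_pow_left₀ (norm_nonneg _) hX 2
      _ = singVal X ⟨0, j.pos⟩ ^ 2 * ‖Matrix.toEuclideanLin M v‖ ^ 2 := by ring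
      _ ≤ singVal X ⟨0, j.pos⟩ ^ 2 * (singVal M j ^ 2 * ‖v‖ ^ 2) :=
          mul_le_mul_of_nonneg_left hM (by positivity)
      _ = (singVal X ⟨0, j.pos⟩ * singVal M j) ^ 2 * ‖v‖ ^ 2 := by ring
  have hvpos : (0:ℝ) < ‖v‖ ^ 2 := pow_pos (norm_pos_iff.2 hv0) 2
  have h3 : eigDesc (gramH (X * M)) j ≤ (singVal X ⟨0, j.pos⟩ * singVal M j) ^ 2 :=
    le_of_mul_le_mul_right h2 hvpos
  calc singVal (X * M) j = Real.sqrt (eigDesc (gramH (X * M)) j) := rfl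
    _ ≤ Real.sqrt ((singVal X ⟨0, j.pos⟩ * singVal M j) ^ 2) := Real.sqrt_le_sqrt h3
    _ = _ := Real.sqrt_sq (mul_nonneg (singVal_nonneg _ _) (singVal_nonneg _ _))

lemma singVal_mul_le_right (M X : Matrix (Fin n) (Fin n) ℂ) (hX : IsUnit X.det) (j : Fin n) :
    singVal (M * X) j ≤ singVal M j * singVal X ⟨0, j.pos⟩ := by
  have h1 : (Matrix.toEuclideanLin X).comp (Matrix.toEuclideanLin X⁻¹) = LinearMap.id := by
    apply LinearMap.ext; intro v
    rw [LinearMap.comp_apply, ← toEuclideanLin_mul, Matrix.mul_nonsing_inv _ hX]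
    simp [Matrix.toEuclideanLin_apply]
  have h2 : (Matrix.toEuclideanLin X⁻¹).comp (Matrix.toEuclideanLin X) = LinearMap.id := by
    apply LinearMap.ext; intro v
    rw [LinearMap.comp_apply, ← toEuclideanLin_mul, Matrix.nonsing_inv_mul _ hX]
    simp [Matrix.toEuclideanLin_apply]
  set e : EuclideanSpace ℂ (Fin n) ≃ₗ[ℂ] EuclideanSpace ℂ (Fin n) :=
    LinearEquiv.ofLinear (Matrix.toEuclideanLin X) (Matrix.toEuclideanLin X⁻¹) h1 h2 with he
  set W := (botSpan (gramH M) j).map e.symm.toLinearMap with hWdef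
  have hfr : n ≤ Module.finrank ℂ W + j := by
    rw [hWdef]
    have hfin : Module.finrank ℂ ((botSpan (gramH M) j).map e.symm.toLinearMap) =
        Module.finrank ℂ (botSpan (gramH M) j) := LinearEquiv.finrank_map_eq e.symm _
    rw [hfin, finrank_botSpan]
    have := j.isLt
    omega
  obtain ⟨v, hvW, hv0, hkey⟩ := exists_cf (gramH (M * X)) j W hfr
  obtain ⟨w, hw, hvw⟩ := Submodule.mem_map.1 hvW
  have hev : Matrix.toEuclideanLin X v = w := by
    rw [← hvw]
    exact e.apply_symm_apply w
  have hM : ‖Matrix.toEuclideanLin M w‖ ^ 2 ≤ singVal M j ^ 2 * ‖w‖ ^ 2 := by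
    refine sq_norm_le M j w fun k hk => repr_eq_zero_of_mem_span _ _ hw ?_
    simp only [Finset.coe_Ici, Set.mem_Ici]
    exact not_le.2 hk
  have hXb : ‖w‖ ≤ singVal X ⟨0, j.pos⟩ * ‖v‖ := by
    rw [← hev]; exact norm_apply_le X j.pos v
  rw [ray_gram, toEuclideanLin_mul, hev] at hkey
  have h3 : eigDesc (gramH (M * X)) j * ‖v‖ ^ 2 ≤
      (singVal M j * singVal X ⟨0, j.pos⟩) ^ 2 * ‖v‖ ^ 2 := by
    calc eigDesc (gramH (M * X)) j * ‖v‖ ^ 2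
        ≤ ‖Matrix.toEuclideanLin M w‖ ^ 2 := hkey
      _ ≤ singVal M j ^ 2 * ‖w‖ ^ 2 := hM
      _ ≤ singVal M j ^ 2 * (singVal X ⟨0, j.pos⟩ * ‖v‖) ^ 2 := by
          apply mul_le_mul_of_nonneg_left _ (by positivity)
          exact pow_le_pow_left₀ (norm_nonneg _) hXb 2
      _ = (singVal M j * singVal X ⟨0, j.pos⟩) ^ 2 * ‖v‖ ^ 2 := by ring
  have hvpos : (0:ℝ) < ‖v‖ ^ 2 := pow_pos (norm_pos_iff.2 hv0) 2
  have h4 : eigDesc (gramH (M * X)) j ≤ (singVal M j * singVal X ⟨0, j.pos⟩) ^ 2 :=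
    le_of_mul_le_mul_right h3 hvpos
  calc singVal (M * X) j = Real.sqrt (eigDesc (gramH (M * X)) j) := rfl
    _ ≤ Real.sqrt ((singVal M j * singVal X ⟨0, j.pos⟩) ^ 2) := Real.sqrt_le_sqrt h4
    _ = _ := Real.sqrt_sq (mul_nonneg (singVal_nonneg _ _) (singVal_nonneg _ _))


lemma eigDesc_achieved {A : Matrix (Fin n) (Fin n) ℂ} (hA : A.IsHermitian) (j : Fin n) :
    eigDesc hA j =
      RCLike.re (inner ℂ (descBasis hA j) (Matrix.toEuclideanLin A (descBasis hA j)) : ℂ) := by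
  rw [toEuclideanLin_descBasis, inner_smul_right, inner_self_eq_norm_sq_to_K,
    (descBasis hA).orthonormal.1 j]
  simp

lemma singVal_smul_one (c : ℂ) (j : Fin n) :
    singVal (c • (1 : Matrix (Fin n) (Fin n) ℂ)) j = ‖c‖ := by
  have hg : (c • (1 : Matrix (Fin n) (Fin n) ℂ))ᴴ * (c • 1) =
      ((‖c‖ : ℂ) ^ 2) • (1 : Matrix (Fin n) (Fin n) ℂ) := by
    rw [Matrix.conjTranspose_smul, Matrix.conjTranspose_one, Matrix.smul_mul,
      Matrix.mul_smul, one_mul, smul_smul]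
    congr 1
    rw [Complex.star_def, Complex.conj_mul']
  have hval : eigDesc (gramH (c • (1 : Matrix (Fin n) (Fin n) ℂ))) j = ‖c‖ ^ 2 := by
    rw [eigDesc_achieved]
    set b := descBasis (gramH (c • (1 : Matrix (Fin n) (Fin n) ℂ))) j
    have : Matrix.toEuclideanLin ((c • (1 : Matrix (Fin n) (Fin n) ℂ))ᴴ * (c • 1)) b =
        ((‖c‖ : ℂ) ^ 2) • b := by
      rw [hg, _root_.map_smul, LinearMap.smul_apply]
      congr 1
      simp [Matrix.toEuclideanLin_apply]
    rw [this, inner_smul_right, inner_self_eq_norm_sq_to_K,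
      (descBasis (gramH (c • (1 : Matrix (Fin n) (Fin n) ℂ)))).orthonormal.1 j]
    simp [← Complex.ofReal_pow]
  rw [singVal, hval, Real.sqrt_sq (norm_nonneg _)]

lemma singVal_smul_le (c : ℂ) (N : Matrix (Fin n) (Fin n) ℂ) (j : Fin n) :
    singVal (c • N) j ≤ ‖c‖ * singVal N j := by
  have h : c • N = (c • (1 : Matrix (Fin n) (Fin n) ℂ)) * N := by
    rw [smul_mul_assoc, one_mul]
  rw [h]
  have := singVal_mul_le_left (c • (1 : Matrix (Fin n) (Fin n) ℂ)) N j
  rwa [singVal_smul_one] at this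

lemma lower_bound (A : Matrix (Fin n) (Fin n) ℂ) (hn : 0 < n) (w : EuclideanSpace ℂ (Fin n)) :
    (1 - singVal A ⟨0, hn⟩) * ‖w‖ ≤
      ‖Matrix.toEuclideanLin (A + Complex.I • 1) w‖ := by
  have hsplit : Matrix.toEuclideanLin (A + Complex.I • 1) w =
      Matrix.toEuclideanLin A w + Complex.I • w := by
    rw [map_add, LinearMap.add_apply, _root_.map_smul, LinearMap.smul_apply]
    congr 1
    simp [Matrix.toEuclideanLin_apply]
  rw [hsplit]
  have h1 : ‖Complex.I • w‖ = ‖w‖ := by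
    rw [norm_smul, Complex.norm_I, one_mul]
  have h2 : ‖Complex.I • w‖ - ‖Matrix.toEuclideanLin A w‖ ≤
      ‖Matrix.toEuclideanLin A w + Complex.I • w‖ := by
    have h := norm_sub_norm_le (Complex.I • w) (-(Matrix.toEuclideanLin A w))
    rw [norm_neg, sub_neg_eq_add] at h
    simpa [add_comm] using h
  have h3 : ‖Matrix.toEuclideanLin A w‖ ≤ singVal A ⟨0, hn⟩ * ‖w‖ := norm_apply_le A hn w
  nlinarith [h1, h2, h3]

lemma isUnit_det_addI (A : Matrix (Fin n) (Fin n) ℂ) (hn : 0 < n)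
    (h1 : singVal A ⟨0, hn⟩ < 1) : IsUnit (A + Complex.I • 1).det := by
  apply (Matrix.isUnit_iff_isUnit_det _).1
  rw [← Matrix.mulVec_injective_iff_isUnit]
  have hinj : Function.Injective (Matrix.toEuclideanLin (A + Complex.I • 1)) := by
    rw [injective_iff_map_eq_zero]
    intro w hw
    have := lower_bound A hn w
    rw [hw, norm_zero] at this
    have hwn : ‖w‖ ≤ 0 := by nlinarith
    exact norm_le_zero_iff.1 hwn
  intro x y hxy
  have hx : Matrix.toEuclideanLin (A + Complex.I • 1) ((WithLp.equiv 2 _).symm x) =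
      Matrix.toEuclideanLin (A + Complex.I • 1) ((WithLp.equiv 2 _).symm y) := by
    simp only [Matrix.toEuclideanLin_apply, Equiv.apply_symm_apply]
    exact congrArg (WithLp.toLp 2) hxy
  have := hinj hx
  exact (WithLp.equiv 2 _).symm.injective this

lemma singVal_inv_le (A : Matrix (Fin n) (Fin n) ℂ) (hn : 0 < n)
    (h1 : singVal A ⟨0, hn⟩ < 1) :
    singVal (A + Complex.I • 1)⁻¹ ⟨0, hn⟩ ≤ (1 - singVal A ⟨0, hn⟩)⁻¹ := by
  set S := A + Complex.I • (1 : Matrix (Fin n) (Fin n) ℂ) with hS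
  have hdet := isUnit_det_addI A hn h1
  set v := descBasis (gramH S⁻¹) ⟨0, hn⟩ with hv
  have hv1 : ‖v‖ = 1 := (descBasis (gramH S⁻¹)).orthonormal.1 _
  set w := Matrix.toEuclideanLin S⁻¹ v with hw
  have hwn : ‖w‖ ^ 2 = singVal S⁻¹ ⟨0, hn⟩ ^ 2 := by
    rw [hw, singVal_sq, eigDesc_achieved, ray_gram]
  have hwnorm : ‖w‖ = singVal S⁻¹ ⟨0, hn⟩ := by
    rw [← Real.sqrt_sq (norm_nonneg w), hwn, Real.sqrt_sq (singVal_nonneg _ _)]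
  have hSw : Matrix.toEuclideanLin S w = v := by
    rw [hw, ← toEuclideanLin_mul, Matrix.mul_nonsing_inv _ hdet]
    simp [Matrix.toEuclideanLin_apply]
  have hlb := lower_bound A hn w
  rw [← hS, hSw, hv1] at hlb
  rw [hwnorm] at hlb
  have hpos : (0:ℝ) < 1 - singVal A ⟨0, hn⟩ := by
    have := singVal_nonneg A ⟨0, hn⟩
    linarith
  calc singVal S⁻¹ ⟨0, hn⟩
      = (1 - singVal A ⟨0, hn⟩) * singVal S⁻¹ ⟨0, hn⟩ * (1 - singVal A ⟨0, hn⟩)⁻¹ := by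
        field_simp
    _ ≤ 1 * (1 - singVal A ⟨0, hn⟩)⁻¹ :=
        mul_le_mul_of_nonneg_right hlb (by positivity)
    _ = (1 - singVal A ⟨0, hn⟩)⁻¹ := one_mul _


lemma cayley_diff (A B : Matrix (Fin n) (Fin n) ℂ)
    (hA : IsUnit (A + Complex.I • 1).det) (hB : IsUnit (B + Complex.I • 1).det) :
    (A - Complex.I • 1) * (A + Complex.I • 1)⁻¹ -
        (B - Complex.I • 1) * (B + Complex.I • 1)⁻¹ =
      (2 * Complex.I) • ((B + Complex.I • 1)⁻¹ * (A - B) * (A + Complex.I • 1)⁻¹) := by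
  set SA := A + Complex.I • (1 : Matrix (Fin n) (Fin n) ℂ) with hSA
  set SB := B + Complex.I • (1 : Matrix (Fin n) (Fin n) ℂ) with hSB
  have hcomm : (B - Complex.I • 1) * SB = SB * (B - Complex.I • 1) := by
    rw [hSB]
    simp only [sub_mul, mul_sub, mul_add, add_mul, Matrix.mul_smul, Matrix.smul_mul,
      mul_one, one_mul, smul_smul]
    abel
  have hBcomm : SB⁻¹ * (B - Complex.I • 1) = (B - Complex.I • 1) * SB⁻¹ := by
    calc SB⁻¹ * (B - Complex.I • 1)
        = SB⁻¹ * (B - Complex.I • 1) * (SB * SB⁻¹) := by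
          rw [Matrix.mul_nonsing_inv _ hB, mul_one]
      _ = SB⁻¹ * ((B - Complex.I • 1) * SB) * SB⁻¹ := by
          rw [mul_assoc, mul_assoc, mul_assoc]
      _ = SB⁻¹ * SB * ((B - Complex.I • 1) * SB⁻¹) := by
          rw [hcomm]
          rw [mul_assoc, mul_assoc, mul_assoc]
      _ = (B - Complex.I • 1) * SB⁻¹ := by
          rw [Matrix.nonsing_inv_mul _ hB, one_mul]
  have hmid : SB * (A - Complex.I • 1) - (B - Complex.I • 1) * SA =
      (2 * Complex.I) • (A - B) := by
    rw [hSA, hSB]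
    simp only [sub_mul, mul_sub, mul_add, add_mul, Matrix.mul_smul, Matrix.smul_mul,
      mul_one, one_mul, smul_smul, smul_sub, two_mul, add_smul]
    abel
  have e1 : (A - Complex.I • 1) * SA⁻¹ = SB⁻¹ * (SB * (A - Complex.I • 1)) * SA⁻¹ := by
    rw [← mul_assoc, Matrix.nonsing_inv_mul _ hB, one_mul]
  have e2 : (B - Complex.I • 1) * SB⁻¹ = SB⁻¹ * ((B - Complex.I • 1) * SA) * SA⁻¹ := by
    rw [← mul_assoc, hBcomm, mul_assoc, mul_assoc, Matrix.mul_nonsing_inv _ hA, mul_one]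
  rw [e1, e2, ← sub_mul, ← Matrix.mul_sub, hmid, Matrix.mul_smul, Matrix.smul_mul]

end SV

noncomputable def hermPart {n : ℕ} (X : Matrix (Fin n) (Fin n) ℂ) :
    Matrix (Fin n) (Fin n) ℂ :=
  (1/2 : ℂ) • (X + Xᴴ)

lemma hermPart_isHermitian {n : ℕ} (X : Matrix (Fin n) (Fin n) ℂ) :
    (hermPart X).IsHermitian := by
  unfold hermPart
  simp [Matrix.IsHermitian, Matrix.conjTranspose_smul, Matrix.conjTranspose_add, add_comm]

theorem stmt18 {n : ℕ} (A B : Matrix (Fin n) (Fin n) ℂ) (hA : ∀ j, singVal A j < 1)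
    (hB : ∀ j, singVal B j < 1) :
    (A - Complex.I • 1) * (A + Complex.I • 1)⁻¹ -
        (B - Complex.I • 1) * (B + Complex.I • 1)⁻¹ =
      (2 * Complex.I) • ((B + Complex.I • 1)⁻¹ * (A - B) * (A + Complex.I • 1)⁻¹) ∧
    ∀ j : Fin n,
      singVal ((A - Complex.I • 1) * (A + Complex.I • 1)⁻¹ -
          (B - Complex.I • 1) * (B + Complex.I • 1)⁻¹) j ≤
        2 * singVal (A - B) j /
          ((1 - singVal A ⟨0, j.pos⟩) * (1 - singVal B ⟨0, j.pos⟩)) := by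
  rcases Nat.eq_zero_or_pos n with h0 | hn
  · subst h0
    refine ⟨?_, fun j => j.elim0⟩
    ext i
    exact i.elim0
  · have hA0 : singVal A ⟨0, hn⟩ < 1 := hA _
    have hB0 : singVal B ⟨0, hn⟩ < 1 := hB _
    have hdA := SV.isUnit_det_addI A hn hA0
    have hdB := SV.isUnit_det_addI B hn hB0
    have hdQ : IsUnit ((A + Complex.I • 1)⁻¹ : Matrix (Fin n) (Fin n) ℂ).det :=
      Matrix.isUnit_nonsing_inv_det _ hdA
    refine ⟨SV.cayley_diff A B hdA hdB, fun j => ?_⟩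
    rw [SV.cayley_diff A B hdA hdB]
    set P := ((B + Complex.I • 1)⁻¹ : Matrix (Fin n) (Fin n) ℂ) with hP
    set Q := ((A + Complex.I • 1)⁻¹ : Matrix (Fin n) (Fin n) ℂ) with hQ
    set M := A - B with hM
    have ha : (0:ℝ) < 1 - singVal A ⟨0, j.pos⟩ := by
      have := hA ⟨0, j.pos⟩; linarith
    have hb : (0:ℝ) < 1 - singVal B ⟨0, j.pos⟩ := by
      have := hB ⟨0, j.pos⟩; linarith
    have h1 : singVal ((2 * Complex.I) • (P * M * Q)) j ≤ 2 * singVal (P * M * Q) j := by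
      have h := SV.singVal_smul_le (2 * Complex.I) (P * M * Q) j
      have hnorm : ‖(2 * Complex.I : ℂ)‖ = 2 := by
        rw [norm_mul, Complex.norm_I, mul_one]
        norm_num
      rwa [hnorm] at h
    have h2 : singVal (P * M * Q) j ≤
        (1 - singVal B ⟨0, j.pos⟩)⁻¹ * (singVal M j * (1 - singVal A ⟨0, j.pos⟩)⁻¹) := by
      calc singVal (P * M * Q) j = singVal (P * (M * Q)) j := by rw [mul_assoc]
        _ ≤ singVal P ⟨0, j.pos⟩ * singVal (M * Q) j := SV.singVal_mul_le_left _ _ _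
        _ ≤ singVal P ⟨0, j.pos⟩ * (singVal M j * singVal Q ⟨0, j.pos⟩) :=
            mul_le_mul_of_nonneg_left (SV.singVal_mul_le_right M Q hdQ j)
              (SV.singVal_nonneg _ _)
        _ ≤ (1 - singVal B ⟨0, j.pos⟩)⁻¹ * (singVal M j * (1 - singVal A ⟨0, j.pos⟩)⁻¹) := by
            apply mul_le_mul (SV.singVal_inv_le B hn hB0)
            · exact mul_le_mul_of_nonneg_left (SV.singVal_inv_le A hn hA0)
                (SV.singVal_nonneg _ _)
            · exact mul_nonneg (SV.singVal_nonneg _ _) (SV.singVal_nonneg _ _)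
            · positivity
    calc singVal ((2 * Complex.I) • (P * M * Q)) j
        ≤ 2 * singVal (P * M * Q) j := h1
      _ ≤ 2 * ((1 - singVal B ⟨0, j.pos⟩)⁻¹ * (singVal M j * (1 - singVal A ⟨0, j.pos⟩)⁻¹)) :=
          mul_le_mul_of_nonneg_left h2 (by norm_num)
      _ = 2 * singVal M j / ((1 - singVal A ⟨0, j.pos⟩) * (1 - singVal B ⟨0, j.pos⟩)) := by
          rw [div_eq_mul_inv, mul_inv]
          ring
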